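/- For all positive integers m and n, gcd(m, n) = ( ⌊ ((2^(m²·n·(n+1)) − 2^(m²·n)) · (2^(m²·n²) − 1)) / ((2^(m²·n) − 1) · (2^(m·n²) − 1) · 2^(m²·n²)) ⌋ ) mod 2^(m·n). -/

import Mathlib

open Finset

/-- Counting lemma: solutions of `m*a + n*b = m*n` with `1 ≤ a ≤ n`, `0 ≤ b < m`
number `gcd m n`. -/
lemma mazz_count (m n : ℕ) (hm : 1 ≤ m) (hn : 1 ≤ n) :
    ((Finset.range n ×ˢ Finset.range m).filter
      (fun p => m * (p.1 + 1) + n * p.2 = m * n)).card = Nat.gcd m n := by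
  set d := Nat.gcd m n with hdd
  have hd0 : 0 < d := Nat.gcd_pos_of_pos_left n (by omega)
  set t := n / d with htt
  set s := m / d with hss
  have ht : n = d * t := (Nat.mul_div_cancel' (Nat.gcd_dvd_right m n)).symm
  have hs : m = d * s := (Nat.mul_div_cancel' (Nat.gcd_dvd_left m n)).symm
  have hcop : Nat.Coprime s t := Nat.coprime_div_gcd_div_gcd hd0
  have ht0 : 0 < t := Nat.div_pos (Nat.le_of_dvd (by omega) (Nat.gcd_dvd_right m n)) hd0
  have hs0 : 0 < s := Nat.div_pos (Nat.le_of_dvd (by omega) (Nat.gcd_dvd_left m n)) hd0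
  have main : ∀ p : ℕ × ℕ, p ∈ (Finset.range n ×ˢ Finset.range m).filter
      (fun p => m * (p.1 + 1) + n * p.2 = m * n) →
      ∃ u, 1 ≤ u ∧ u ≤ d ∧ p.1 + 1 = t * u ∧ p.2 = s * (d - u) ∧ (p.1 + 1) / t = u := by
    intro p hp
    simp only [Finset.mem_filter, Finset.mem_product, Finset.mem_range] at hp
    obtain ⟨⟨hp1, hp2⟩, heq⟩ := hp
    have h1 : d * (s * (p.1 + 1) + t * p.2) = d * (s * (d * t)) := by
      calc d * (s * (p.1 + 1) + t * p.2) = (d * s) * (p.1 + 1) + (d * t) * p.2 := by ring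
        _ = m * (p.1 + 1) + n * p.2 := by rw [← hs, ← ht]
        _ = m * n := heq
        _ = d * (s * (d * t)) := by rw [hs, ht]; ring
    have key : s * (p.1 + 1) + t * p.2 = s * (d * t) := Nat.eq_of_mul_eq_mul_left hd0 h1
    have hta : t ∣ p.1 + 1 := by
      have h2 : t ∣ s * (p.1 + 1) := by
        have h3 : t ∣ s * (d * t) := ⟨s * d, by ring⟩
        have h4 : t ∣ t * p.2 := Dvd.intro _ rfl
        have h5 : s * (p.1 + 1) = s * (d * t) - t * p.2 := by omega
        rw [h5]; exact Nat.dvd_sub h3 h4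
      exact (hcop.symm).dvd_of_dvd_mul_left h2
    obtain ⟨u, hu⟩ := hta
    have hu1 : 1 ≤ u := by
      rcases Nat.eq_zero_or_pos u with h | h
      · rw [h, Nat.mul_zero] at hu; omega
      · exact h
    have hud : u ≤ d := by
      have h6 : t * u ≤ t * d := by
        rw [← hu]
        calc p.1 + 1 ≤ n := by omega
          _ = d * t := ht
          _ = t * d := by ring
      exact Nat.le_of_mul_le_mul_left h6 ht0
    have h6 : t * (s * u + p.2) = t * (s * d) := by
      calc t * (s * u + p.2) = s * (t * u) + t * p.2 := by ring
        _ = s * (p.1 + 1) + t * p.2 := by rw [← hu]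
        _ = s * (d * t) := key
        _ = t * (s * d) := by ring
    have h7 : s * u + p.2 = s * d := Nat.eq_of_mul_eq_mul_left ht0 h6
    have h8 : p.2 = s * (d - u) := by rw [Nat.mul_sub]; omega
    have h9 : (p.1 + 1) / t = u := by rw [hu, Nat.mul_div_cancel_left _ ht0]
    exact ⟨u, hu1, hud, hu, h8, h9⟩
  rw [← Finset.card_range d]
  apply Finset.card_nbij' (fun p => (p.1 + 1) / t - 1)
    (fun k => ((k + 1) * t - 1, s * (d - 1 - k)))
  · intro p hp
    obtain ⟨u, hu1, hud, _, _, h9⟩ := main p hp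
    beta_reduce; rw [Finset.mem_coe, Finset.mem_range, h9]; omega
  · intro k hk
    rw [Finset.mem_coe, Finset.mem_range] at hk
    have hkt : 1 ≤ (k + 1) * t := Nat.mul_pos (by omega) ht0
    simp only [Finset.mem_coe, Finset.mem_filter, Finset.mem_product, Finset.mem_range]
    refine ⟨⟨?_, ?_⟩, ?_⟩
    · have h1 : (k + 1) * t ≤ d * t := Nat.mul_le_mul_right t (by omega)
      have h2 : (k + 1) * t - 1 < (k + 1) * t := Nat.sub_lt (by omega) one_pos
      calc (k + 1) * t - 1 < (k + 1) * t := h2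
        _ ≤ d * t := h1
        _ = n := ht.symm
    · calc s * (d - 1 - k) < s * d := mul_lt_mul_of_pos_left (by omega : d - 1 - k < d) hs0
        _ = m := by rw [hs]; ring
    · have hc : (k + 1) * t - 1 + 1 = (k + 1) * t := Nat.sub_add_cancel hkt
      have hsum : (k + 1) + (d - 1 - k) = d := by omega
      calc m * ((k + 1) * t - 1 + 1) + n * (s * (d - 1 - k))
          = m * ((k + 1) * t) + n * (s * (d - 1 - k)) := by rw [hc]
        _ = (d * s * t) * ((k + 1) + (d - 1 - k)) := by rw [hs, ht]; ring
        _ = (d * s * t) * d := by rw [hsum]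
        _ = m * n := by rw [hs, ht]; ring
  · intro p hp
    obtain ⟨u, hu1, hud, hu, h8, h9⟩ := main p hp
    beta_reduce; rw [h9, show u - 1 + 1 = u from by omega, show d - 1 - (u - 1) = d - u from by omega,
      mul_comm u t, ← hu, ← h8, Nat.add_sub_cancel]
  · intro k hk
    rw [Finset.mem_coe, Finset.mem_range] at hk
    have hkt : 1 ≤ (k + 1) * t := Nat.mul_pos (by omega) ht0
    show ((k + 1) * t - 1 + 1) / t - 1 = k
    rw [Nat.sub_add_cancel hkt, Nat.mul_div_cancel _ ht0]
    omega

lemma mazz_prod (m n : ℕ) (hm : 1 ≤ m) (hn : 1 ≤ n) :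
    (2 ^ (m ^ 2 * n * (n + 1)) - 2 ^ (m ^ 2 * n)) * (2 ^ (m ^ 2 * n ^ 2) - 1) =
      (2 ^ (m ^ 2 * n) - 1) * (2 ^ (m * n ^ 2) - 1) *
        ∑ p ∈ Finset.range n ×ˢ Finset.range m,
          2 ^ (m * n * (m * (p.1 + 1) + n * p.2)) := by
  have e1 : 2 ^ (m ^ 2 * n) ≤ 2 ^ (m ^ 2 * n * (n + 1)) :=
    Nat.pow_le_pow_right (by norm_num) (Nat.le_mul_of_pos_right _ (by omega))
  have e2 : (1 : ℕ) ≤ 2 ^ (m ^ 2 * n ^ 2) := Nat.one_le_two_pow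
  have e3 : (1 : ℕ) ≤ 2 ^ (m ^ 2 * n) := Nat.one_le_two_pow
  have e4 : (1 : ℕ) ≤ 2 ^ (m * n ^ 2) := Nat.one_le_two_pow
  zify [e1, e2, e3, e4]
  set X : ℤ := 2 ^ (m ^ 2 * n) with hX
  set Y : ℤ := 2 ^ (m * n ^ 2) with hY
  have hsx : ∑ i ∈ Finset.range n, X ^ (i + 1) = (∑ i ∈ Finset.range n, X ^ i) * X := by
    rw [Finset.sum_mul]; exact Finset.sum_congr rfl fun i _ => pow_succ X i
  have gx : (X - 1) * (∑ i ∈ Finset.range n, X ^ (i + 1))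
      = 2 ^ (m ^ 2 * n * (n + 1)) - X := by
    rw [hsx]
    calc (X - 1) * ((∑ i ∈ Finset.range n, X ^ i) * X)
        = ((∑ i ∈ Finset.range n, X ^ i) * (X - 1)) * X := by ring
      _ = (X ^ n - 1) * X := by rw [geom_sum_mul]
      _ = X ^ (n + 1) - X := by rw [sub_mul, one_mul, ← pow_succ]
      _ = 2 ^ (m ^ 2 * n * (n + 1)) - X := by rw [hX, ← pow_mul]
  have gy : (Y - 1) * (∑ j ∈ Finset.range m, Y ^ j) = 2 ^ (m ^ 2 * n ^ 2) - 1 := by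
    rw [mul_comm, geom_sum_mul, hY, ← pow_mul, show m * n ^ 2 * m = m ^ 2 * n ^ 2 from by ring]
  have hS : (∑ p ∈ Finset.range n ×ˢ Finset.range m,
        (2 : ℤ) ^ (m * n * (m * (p.1 + 1) + n * p.2)))
      = (∑ i ∈ Finset.range n, X ^ (i + 1)) * (∑ j ∈ Finset.range m, Y ^ j) := by
    rw [Finset.sum_mul_sum, Finset.sum_product]
    refine Finset.sum_congr rfl fun i _ => Finset.sum_congr rfl fun j _ => ?_
    rw [hX, hY, ← pow_mul, ← pow_mul, ← pow_add]
    congr 1; ring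
  rw [hS, show (X - 1) * (Y - 1) *
      ((∑ i ∈ Finset.range n, X ^ (i + 1)) * (∑ j ∈ Finset.range m, Y ^ j))
      = ((X - 1) * (∑ i ∈ Finset.range n, X ^ (i + 1))) *
        ((Y - 1) * (∑ j ∈ Finset.range m, Y ^ j)) from by ring, gx, gy]

lemma mazz_sum (m n : ℕ) (hm : 1 ≤ m) (hn : 1 ≤ n) :
    (∑ p ∈ Finset.range n ×ˢ Finset.range m, 2 ^ (m * n * (m * (p.1 + 1) + n * p.2)))
      / 2 ^ (m * n * (m * n)) % 2 ^ (m * n) = Nat.gcd m n := by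
  have hL : 0 < m * n := Nat.mul_pos hm hn
  set s0 := Finset.range n ×ˢ Finset.range m with hs0
  set F := s0.filter (fun p => m * n ≤ m * (p.1 + 1) + n * p.2) with hF
  set G := s0.filter (fun p => ¬ m * n ≤ m * (p.1 + 1) + n * p.2) with hG
  have split1 : (∑ p ∈ s0, 2 ^ (m * n * (m * (p.1 + 1) + n * p.2)))
      = (∑ p ∈ F, 2 ^ (m * n * (m * (p.1 + 1) + n * p.2)))
        + ∑ p ∈ G, 2 ^ (m * n * (m * (p.1 + 1) + n * p.2)) :=
    (Finset.sum_filter_add_sum_filter_not s0 _ _).symm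
  have hhigh : (∑ p ∈ F, 2 ^ (m * n * (m * (p.1 + 1) + n * p.2)))
      = 2 ^ (m * n * (m * n)) * ∑ p ∈ F, 2 ^ (m * n * (m * (p.1 + 1) + n * p.2 - m * n)) := by
    rw [Finset.mul_sum]
    refine Finset.sum_congr rfl fun p hp => ?_
    rw [hF, Finset.mem_filter] at hp
    rw [← pow_add, ← Nat.mul_add, Nat.add_sub_cancel' hp.2]
  have hlow : (∑ p ∈ G, 2 ^ (m * n * (m * (p.1 + 1) + n * p.2))) < 2 ^ (m * n * (m * n)) := by
    have step1 : (∑ p ∈ G, 2 ^ (m * n * (m * (p.1 + 1) + n * p.2)))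
        ≤ ∑ _p ∈ G, 2 ^ (m * n * (m * n - 1)) := by
      refine Finset.sum_le_sum fun p hp => ?_
      rw [hG, Finset.mem_filter] at hp
      exact Nat.pow_le_pow_right (by norm_num)
        (Nat.mul_le_mul_left _ (Nat.le_pred_of_lt (Nat.lt_of_not_le hp.2)))
    have step3 : G.card ≤ m * n := by
      calc G.card ≤ s0.card := Finset.card_filter_le _ _
        _ = n * m := by rw [hs0, Finset.card_product, Finset.card_range, Finset.card_range]
        _ = m * n := Nat.mul_comm n m
    have step5 : m * n + m * n * (m * n - 1) = m * n * (m * n) := by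
      obtain ⟨K, hK⟩ : ∃ K, m * n = K + 1 := ⟨m * n - 1, by omega⟩
      rw [hK, Nat.add_sub_cancel]; ring
    calc (∑ p ∈ G, 2 ^ (m * n * (m * (p.1 + 1) + n * p.2)))
        ≤ ∑ _p ∈ G, 2 ^ (m * n * (m * n - 1)) := step1
      _ = G.card * 2 ^ (m * n * (m * n - 1)) := by rw [Finset.sum_const, smul_eq_mul]
      _ ≤ (m * n) * 2 ^ (m * n * (m * n - 1)) := Nat.mul_le_mul_right _ step3
      _ < 2 ^ (m * n) * 2 ^ (m * n * (m * n - 1)) :=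
          (Nat.mul_lt_mul_right (by positivity)).mpr Nat.lt_two_pow_self
      _ = 2 ^ (m * n * (m * n)) := by rw [← pow_add, step5]
  have hdiv : (∑ p ∈ s0, 2 ^ (m * n * (m * (p.1 + 1) + n * p.2))) / 2 ^ (m * n * (m * n))
      = ∑ p ∈ F, 2 ^ (m * n * (m * (p.1 + 1) + n * p.2 - m * n)) := by
    rw [split1, hhigh, Nat.mul_add_div (by positivity), Nat.div_eq_of_lt hlow, Nat.add_zero]
  set T := F.filter (fun p => m * (p.1 + 1) + n * p.2 = m * n) with hT
  set U := F.filter (fun p => ¬ m * (p.1 + 1) + n * p.2 = m * n) with hU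
  have split2 : (∑ p ∈ F, 2 ^ (m * n * (m * (p.1 + 1) + n * p.2 - m * n)))
      = (∑ p ∈ T, 2 ^ (m * n * (m * (p.1 + 1) + n * p.2 - m * n)))
        + ∑ p ∈ U, 2 ^ (m * n * (m * (p.1 + 1) + n * p.2 - m * n)) :=
    (Finset.sum_filter_add_sum_filter_not F _ _).symm
  have hTsum : (∑ p ∈ T, 2 ^ (m * n * (m * (p.1 + 1) + n * p.2 - m * n))) = T.card := by
    calc (∑ p ∈ T, 2 ^ (m * n * (m * (p.1 + 1) + n * p.2 - m * n)))
        = ∑ _p ∈ T, 1 := by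
          refine Finset.sum_congr rfl fun p hp => ?_
          rw [hT, Finset.mem_filter] at hp
          rw [hp.2, Nat.sub_self, Nat.mul_zero, pow_zero]
      _ = T.card := by rw [Finset.sum_const, smul_eq_mul, Nat.mul_one]
  have hUsum : (∑ p ∈ U, 2 ^ (m * n * (m * (p.1 + 1) + n * p.2 - m * n)))
      = 2 ^ (m * n) * ∑ p ∈ U, 2 ^ (m * n * (m * (p.1 + 1) + n * p.2 - m * n) - m * n) := by
    rw [Finset.mul_sum]
    refine Finset.sum_congr rfl fun p hp => ?_
    rw [hU, Finset.mem_filter, hF, Finset.mem_filter] at hp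
    obtain ⟨⟨_, hge⟩, hne⟩ := hp
    have h1 : 0 < m * (p.1 + 1) + n * p.2 - m * n :=
      Nat.sub_pos_of_lt (Nat.lt_of_le_of_ne hge (Ne.symm hne))
    have h2 : m * n ≤ m * n * (m * (p.1 + 1) + n * p.2 - m * n) :=
      Nat.le_mul_of_pos_right _ h1
    rw [← pow_add, Nat.add_sub_cancel' h2]
  have hTcard : T = s0.filter (fun p => m * (p.1 + 1) + n * p.2 = m * n) := by
    rw [hT, hF, Finset.filter_filter]
    apply Finset.filter_congr
    intro p _
    constructor
    · exact And.right
    · intro h; exact ⟨le_of_eq h.symm, h⟩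
  have hgcd_lt : Nat.gcd m n < 2 ^ (m * n) := by
    calc Nat.gcd m n ≤ m := Nat.gcd_le_left n hm
      _ ≤ m * n := Nat.le_mul_of_pos_right m hn
      _ < 2 ^ (m * n) := Nat.lt_two_pow_self
  rw [hdiv, split2, hTsum, hUsum, Nat.add_mul_mod_self_left, hTcard, mazz_count m n hm hn]
  exact Nat.mod_eq_of_lt hgcd_lt

theorem stmt_3 (m n : ℕ) (hm : 1 ≤ m) (hn : 1 ≤ n) :
    Nat.gcd m n =
      ((2 ^ (m ^ 2 * n * (n + 1)) - 2 ^ (m ^ 2 * n)) * (2 ^ (m ^ 2 * n ^ 2) - 1)) /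
          ((2 ^ (m ^ 2 * n) - 1) * (2 ^ (m * n ^ 2) - 1) * 2 ^ (m ^ 2 * n ^ 2)) %
        2 ^ (m * n) := by
  have hA : (2 : ℕ) ≤ 2 ^ (m ^ 2 * n) := by
    calc (2 : ℕ) = 2 ^ 1 := rfl
      _ ≤ 2 ^ (m ^ 2 * n) := Nat.pow_le_pow_right (by norm_num)
        (Nat.one_le_iff_ne_zero.mpr (by positivity))
  have hB : (2 : ℕ) ≤ 2 ^ (m * n ^ 2) := by
    calc (2 : ℕ) = 2 ^ 1 := rfl
      _ ≤ 2 ^ (m * n ^ 2) := Nat.pow_le_pow_right (by norm_num)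
        (Nat.one_le_iff_ne_zero.mpr (by positivity))
  have hc : 0 < (2 ^ (m ^ 2 * n) - 1) * (2 ^ (m * n ^ 2) - 1) :=
    Nat.mul_pos (by omega) (by omega)
  rw [mazz_prod m n hm hn, show m ^ 2 * n ^ 2 = m * n * (m * n) from by ring,
    Nat.mul_div_mul_left _ _ hc, mazz_sum m n hm hn]
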